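/- Let p : Y → X be a measurable G-equivariant map between standard Borel G-spaces, with ν a quasi-invariant probability measure on Y and μ a quasi-invariant probability measure on X, and suppose ((Y,ν),(X,μ),p) is a measure preserving pair, i.e. there is a measurable family (ρ^x)_{x∈X} of probability measures on Y with ρ^x concentrated on p⁻¹(x) for μ-a.e. x, ν = ∫ ρ^x dμ(x), and for every g ∈ G: g_*ρ^x = ρ^{g•x} for μ-a.e. x. Assume both actions are ergodic. Let L be a representation of X⋊G on a separable complex Hilbert space K and let b be an L-cocycle. If the pull-back of b to Y⋊G is a coboundary — that is, there exists a measurable ξ : Y → K such that for every g ∈ G: ξ(y) = L(p(y), g) ξ(g⁻¹•y) + b(p(y), g) for ν-a.e. y — then b is an L-coboundary. -/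

import Mathlib

open MeasureTheory Filter Topology
open scoped Pointwise symmDiff InnerProductSpace ENNReal

section Defs

variable (G : Type*) {X : Type*} [Group G] [MulAction G X] [MeasurableSpace X]

/-- The action of `G` on `X` is measurable and the measure `μ` is quasi-invariant:
for every `g`, the pushforward of `μ` under `x ↦ g • x` is equivalent to `μ`. -/
def QuasiInvariantAction (μ : Measure X) : Prop :=
  (∀ g : G, Measurable fun x : X => g • x) ∧
    ∀ g : G, μ.map (fun x : X => g • x) ≪ μ ∧ μ ≪ μ.map (fun x : X => g • x)

/-- Ergodicity of the action: every measurable `A` with `μ((g • A) ∆ A) = 0` for all `g`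
is null or conull. -/
def IsErgodicSMulAction (μ : Measure X) : Prop :=
  ∀ A : Set X, MeasurableSet A → (∀ g : G, μ ((g • A) ∆ A) = 0) → μ A = 0 ∨ μ A = 1

variable {G}
variable {K : Type*} [NormedAddCommGroup K] [InnerProductSpace ℂ K]
  [MeasurableSpace K] [BorelSpace K]

/-- A representation of the action groupoid `X ⋊ G` on the Hilbert space `K`. -/
def IsGroupoidRep (μ : Measure X) (L : X → G → (K ≃ₗᵢ[ℂ] K)) : Prop :=
  (∀ (g : G) (v : K), Measurable fun x : X => L x g v) ∧
    ∀ g₁ g₂ : G, ∀ᵐ x ∂μ, ∀ v : K, L x (g₁ * g₂) v = L x g₁ (L (g₁⁻¹ • x) g₂ v)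

/-- An `L`-cocycle. -/
def IsLCocycle (μ : Measure X) (L : X → G → (K ≃ₗᵢ[ℂ] K)) (b : X → G → K) : Prop :=
  (∀ g : G, Measurable fun x : X => b x g) ∧
    ∀ g₁ g₂ : G, ∀ᵐ x ∂μ, b x (g₁ * g₂) = b x g₁ + L x g₁ (b (g₁⁻¹ • x) g₂)

/-- An `L`-coboundary. -/
def IsLCoboundary (μ : Measure X) (L : X → G → (K ≃ₗᵢ[ℂ] K)) (b : X → G → K) : Prop :=
  ∃ ξ : X → K, Measurable ξ ∧ ∀ g : G, ∀ᵐ x ∂μ, b x g = ξ x - L x g (ξ (g⁻¹ • x))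

/-- A unit section: a measurable map `ξ : X → K` of norm one almost everywhere. -/
def IsUnitSection (μ : Measure X) (ξ : X → K) : Prop :=
  Measurable ξ ∧ ∀ᵐ x ∂μ, ‖ξ x‖ = 1

/-- The representation `L` has an invariant unit section. -/
def HasInvariantUnitSection (μ : Measure X) (L : X → G → (K ≃ₗᵢ[ℂ] K)) : Prop :=
  ∃ ξ : X → K, IsUnitSection μ ξ ∧ ∀ g : G, ∀ᵐ x ∂μ, L x g (ξ (g⁻¹ • x)) = ξ x

/-- The representation `L` almost has invariant unit sections. -/
def AlmostHasInvariantUnitSections (μ : Measure X) (L : X → G → (K ≃ₗᵢ[ℂ] K)) : Prop :=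
  ∃ ξ : ℕ → X → K, (∀ n, IsUnitSection μ (ξ n)) ∧
    ∀ g : G, ∀ᵐ x ∂μ,
      Tendsto (fun n => ‖L x g (ξ n (g⁻¹ • x)) - ξ n x‖) atTop (𝓝 0)

variable (G)

/-- Property (T) for the action of `G` on `(X, μ)`: every representation of `X ⋊ G`
on a separable complex Hilbert space that almost has invariant unit sections has an
invariant unit section. -/
def ActionHasPropertyT (μ : Measure X) : Prop :=
  ∀ (K : Type) [NormedAddCommGroup K] [InnerProductSpace ℂ K]
    [CompleteSpace K] [SecondCountableTopology K]
    [MeasurableSpace K] [BorelSpace K]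
    (L : X → G → (K ≃ₗᵢ[ℂ] K)),
    IsGroupoidRep μ L → AlmostHasInvariantUnitSections μ L → HasInvariantUnitSection μ L

end Defs

open ProbabilityTheory

section Helpers

open ProbabilityTheory

variable {X Y : Type*} [MeasurableSpace X] [MeasurableSpace Y]

/-- Transfer a `μ`-a.e. property on the base to a `ν`-a.e. property on the total space. -/
lemma ae_comp_base {μ : Measure X} {ν : Measure Y} {p : Y → X} (hp : Measurable p)
    {ρ : X → Measure Y} (hρmeas : Measurable ρ)
    (hρfib : ∀ᵐ x ∂μ, ρ x {y | p y ≠ x} = 0)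
    (hdisint : ν = μ.bind ρ) {P : X → Prop} (h : ∀ᵐ x ∂μ, P x) :
    ∀ᵐ y ∂ν, P (p y) := by
  rw [ae_iff] at h ⊢
  set N := {x | ¬ P x} with hN
  set t := toMeasurable μ N with ht
  have htm : MeasurableSet t := measurableSet_toMeasurable μ N
  have htnull : μ t = 0 := by rw [ht, measure_toMeasurable]; exact h
  have hsub : {y | ¬ P (p y)} ⊆ p ⁻¹' t := fun y hy => subset_toMeasurable μ N hy
  refine measure_mono_null hsub ?_
  rw [hdisint, Measure.bind_apply (hp htm) hρmeas.aemeasurable]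
  have h0 : ∀ᵐ x ∂μ, ρ x (p ⁻¹' t) = 0 := by
    filter_upwards [hρfib, measure_eq_zero_iff_ae_notMem.mp htnull] with x hx1 hx2
    refine measure_mono_null (fun y hy => ?_) hx1
    intro hpy
    exact hx2 (hpy ▸ hy)
  rw [lintegral_congr_ae h0, lintegral_zero]

/-- Transfer a `ν`-a.e. property to a fiberwise a.e. property. -/
lemma ae_fiber_of_ae {μ : Measure X} {ν : Measure Y}
    {ρ : X → Measure Y} (hρmeas : Measurable ρ)
    (hdisint : ν = μ.bind ρ) {Q : Y → Prop} (h : ∀ᵐ y ∂ν, Q y) :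
    ∀ᵐ x ∂μ, ∀ᵐ y ∂ρ x, Q y := by
  rw [ae_iff] at h
  set N := {y | ¬ Q y} with hN
  set t := toMeasurable ν N with ht
  have htm : MeasurableSet t := measurableSet_toMeasurable ν N
  have htnull : ν t = 0 := by rw [ht, measure_toMeasurable]; exact h
  rw [hdisint, Measure.bind_apply htm hρmeas.aemeasurable] at htnull
  have hmeas : Measurable fun x => ρ x t := (Measure.measurable_coe htm).comp hρmeas
  rw [lintegral_eq_zero_iff hmeas] at htnull
  filter_upwards [htnull] with x hx
  exact ae_iff.mpr (measure_mono_null (fun y hy => subset_toMeasurable ν N hy) hx)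

lemma QuasiInvariantAction.qmp {G : Type*} [Group G] [MulAction G X] {μ : Measure X}
    (h : QuasiInvariantAction G μ) (g : G) :
    Measure.QuasiMeasurePreserving (fun x : X => g • x) μ μ :=
  ⟨h.1 g, (h.2 g).1⟩

end Helpers

/-- For a measure preserving ergodic pair `((Y,ν),(X,μ),p)` of standard Borel `G`-spaces of a
countable discrete group `G`, a representation `L` of `X ⋊ G` on a separable complex Hilbert
space and an `L`-cocycle `b`: if the pull-back of `b` to `Y ⋊ G` is a coboundary, then `b`
itself is an `L`-coboundary. -/
theorem pullback_coboundary_implies_coboundary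
    {G X Y : Type*} [Group G] [Countable G]
    [MeasurableSpace X] [StandardBorelSpace X] [MulAction G X]
    [MeasurableSpace Y] [StandardBorelSpace Y] [MulAction G Y]
    (μ : Measure X) [IsProbabilityMeasure μ] (ν : Measure Y) [IsProbabilityMeasure ν]
    (hqiX : QuasiInvariantAction G μ) (hqiY : QuasiInvariantAction G ν)
    (hergX : IsErgodicSMulAction G μ) (hergY : IsErgodicSMulAction G ν)
    (p : Y → X) (hp : Measurable p)
    (hequiv : ∀ (g : G) (y : Y), p (g • y) = g • p y)
    (ρ : X → Measure Y) (hρmeas : Measurable ρ)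
    (hρprob : ∀ᵐ x ∂μ, IsProbabilityMeasure (ρ x))
    (hρfib : ∀ᵐ x ∂μ, ρ x {y | p y ≠ x} = 0)
    (hdisint : ν = μ.bind ρ)
    (hρinv : ∀ g : G, ∀ᵐ x ∂μ, (ρ x).map (fun y => g • y) = ρ (g • x))
    {K : Type*} [NormedAddCommGroup K] [InnerProductSpace ℂ K]
    [CompleteSpace K] [SecondCountableTopology K] [MeasurableSpace K] [BorelSpace K]
    (L : X → G → (K ≃ₗᵢ[ℂ] K)) (hL : IsGroupoidRep μ L)
    (b : X → G → K) (hb : IsLCocycle μ L b)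
    (hpullback : ∃ ξ : Y → K, Measurable ξ ∧
      ∀ g : G, ∀ᵐ y ∂ν, ξ y = L (p y) g (ξ (g⁻¹ • y)) + b (p y) g) :
    IsLCoboundary μ L b := by
  classical
  obtain ⟨ξ, hξm, hξrel⟩ := hpullback
  -- quasi-measure-preserving maps
  have qmpX : ∀ g : G, Measure.QuasiMeasurePreserving (fun x : X => g • x) μ μ :=
    fun g => hqiX.qmp g
  have qmpY : ∀ g : G, Measure.QuasiMeasurePreserving (fun y : Y => g • y) ν ν :=
    fun g => hqiY.qmp g
  -- the finite-ized kernel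
  have hκmeas : Measurable (fun x => if ρ x Set.univ = 1 then ρ x else 0) := by
    refine Measurable.ite ?_ hρmeas measurable_const
    exact ((Measure.measurable_coe MeasurableSet.univ).comp hρmeas) (measurableSet_singleton 1)
  set κ : Kernel X Y := ⟨fun x => if ρ x Set.univ = 1 then ρ x else 0, hκmeas⟩ with hκdef
  haveI : IsFiniteKernel κ := by
    refine ⟨⟨1, ENNReal.one_lt_top, fun x => ?_⟩⟩
    show (if ρ x Set.univ = 1 then ρ x else 0) Set.univ ≤ 1
    split
    · simp_all
    · simp
  have hκρ : ∀ᵐ x ∂μ, κ x = ρ x := by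
    filter_upwards [hρprob] with x hx
    have : ρ x Set.univ = 1 := hx.measure_univ
    show (if ρ x Set.univ = 1 then ρ x else 0) = ρ x
    simp [this]
  -- the relation transported by g
  have hE : ∀ g : G, ∀ᵐ w ∂ν, ξ (g • w) = L (g • p w) g (ξ w) + b (g • p w) g := by
    intro g
    filter_upwards [(qmpY g).ae (hξrel g)] with w hw
    simpa [hequiv, inv_smul_smul] using hw
  -- fiberwise version
  have hEfib : ∀ g : G, ∀ᵐ x ∂μ, ∀ᵐ w ∂ρ x,
      ξ (g • w) = L (g • x) g (ξ w) + b (g • x) g := by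
    intro g
    filter_upwards [ae_fiber_of_ae hρmeas hdisint (hE g), hρfib] with x h1 h2
    filter_upwards [h1, ae_iff.mpr h2] with w hw hpw
    rwa [hpw] at hw
  have hEfibκ : ∀ g : G, ∀ᵐ x ∂μ, ∀ᵐ w ∂κ x,
      ξ (g • w) = L (g • x) g (ξ w) + b (g • x) g := by
    intro g
    filter_upwards [hEfib g, hκρ] with x h1 h2
    rwa [h2]
  -- the functions measuring concentration of ξ on fibers
  set h : ℕ → Y → ℝ≥0∞ := fun t y => κ (p y) {y' | ‖ξ y' - ξ y‖ ≤ (t : ℝ)} with hhdef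
  have hSmeas : ∀ (v : K) (t : ℝ), MeasurableSet {y' : Y | ‖ξ y' - v‖ ≤ t} :=
    fun v t => measurableSet_le ((hξm.sub measurable_const).norm) measurable_const
  have hhmeas : ∀ t : ℕ, Measurable (h t) := by
    intro t
    have hset : MeasurableSet {q : Y × Y | ‖ξ q.2 - ξ q.1‖ ≤ (t : ℝ)} :=
      measurableSet_le (((hξm.comp measurable_snd).sub (hξm.comp measurable_fst)).norm)
        measurable_const
    have := Kernel.measurable_kernel_prodMk_left
      (κ := κ.comap p hp) hset
    exact this
  -- invariance of h t
  have hinv : ∀ (t : ℕ) (g : G), ∀ᵐ y ∂ν, h t (g • y) = h t y := by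
    intro t g
    have hmapκ : ∀ᵐ x ∂μ, κ (g • x) = (κ x).map (fun y => g • y) := by
      filter_upwards [hκρ, (qmpX g).ae hκρ, hρinv g] with x h1 h2 h3
      rw [h2, ← h3, h1]
    filter_upwards [ae_comp_base hp hρmeas hρfib hdisint hmapκ,
      ae_comp_base hp hρmeas hρfib hdisint (hEfibκ g), hE g] with y ha hb' hc
    have hpg : p (g • y) = g • p y := hequiv g y
    have hSm : MeasurableSet {y' : Y | ‖ξ y' - ξ (g • y)‖ ≤ (t : ℝ)} := hSmeas _ _
    have step1 : h t (g • y) = κ (p y) ((fun w => g • w) ⁻¹' {y' | ‖ξ y' - ξ (g • y)‖ ≤ (t : ℝ)}) := by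
      show κ (p (g • y)) {y' | ‖ξ y' - ξ (g • y)‖ ≤ (t : ℝ)} = _
      rw [hpg, ha, Measure.map_apply (hqiY.1 g) hSm]
    rw [step1]
    refine measure_congr ?_
    filter_upwards [hb'] with w hw
    have : ξ (g • w) - ξ (g • y) = L (g • p y) g (ξ w - ξ y) := by
      rw [hw, hc, map_sub]
      abel
    simp only [Set.mem_preimage, Set.mem_setOf_eq, eq_iff_iff]
    constructor <;> intro hmem
    · have hn : ‖ξ (g • w) - ξ (g • y)‖ ≤ (t : ℝ) := hmem
      rw [this, LinearIsometryEquiv.norm_map] at hn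
      exact hn
    · show ‖ξ (g • w) - ξ (g • y)‖ ≤ (t : ℝ)
      rw [this, LinearIsometryEquiv.norm_map]
      exact hmem
  -- the level sets are invariant, hence null or conull
  have hAer : ∀ t : ℕ, ν {y | 1/2 < h t y} = 0 ∨ ν {y | 1/2 < h t y} = 1 := by
    intro t
    refine hergY _ (measurableSet_lt measurable_const (hhmeas t)) ?_
    intro g
    have hnull : ν {z | ¬ (h t (g⁻¹ • z) = h t z)} = 0 := ae_iff.mp (hinv t g⁻¹)
    refine measure_mono_null (fun z hz => ?_) hnull
    intro heq
    rcases Set.mem_symmDiff.mp hz with ⟨hz1, hz2⟩ | ⟨hz1, hz2⟩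
    · have hlt : 1/2 < h t (g⁻¹ • z) := Set.mem_smul_set_iff_inv_smul_mem.mp hz1
      rw [heq] at hlt
      exact hz2 hlt
    · have hlt : 1/2 < h t z := hz1
      rw [← heq] at hlt
      exact hz2 (Set.mem_smul_set_iff_inv_smul_mem.mpr hlt)
  -- a.e. some h t is large
  have huniv : ∀ᵐ y ∂ν, κ (p y) Set.univ = 1 := by
    have hps : ∀ᵐ x ∂μ, κ x Set.univ = 1 := by
      filter_upwards [hκρ, hρprob] with x h1 h2
      rw [h1]
      exact h2.measure_univ
    exact ae_comp_base hp hρmeas hρfib hdisint hps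
  have hlim : ∀ᵐ y ∂ν, ∃ t : ℕ, 1/2 < h t y := by
    filter_upwards [huniv] with y hy
    have hmono : Monotone (fun t : ℕ => {y' | ‖ξ y' - ξ y‖ ≤ (t : ℝ)}) := by
      intro s' t' hst y' hy'
      simp only [Set.mem_setOf_eq] at hy' ⊢
      exact le_trans hy' (Nat.cast_le.mpr hst)
    have htend := tendsto_measure_iUnion_atTop (μ := κ (p y)) hmono
    have hU : ⋃ t : ℕ, {y' | ‖ξ y' - ξ y‖ ≤ (t : ℝ)} = Set.univ := by
      ext y'
      simp only [Set.mem_iUnion, Set.mem_setOf_eq, Set.mem_univ, iff_true]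
      exact exists_nat_ge _
    rw [hU, hy] at htend
    have hhalf : (1:ℝ≥0∞)/2 < 1 := ENNReal.half_lt_self one_ne_zero ENNReal.one_ne_top
    exact (htend.eventually (eventually_gt_nhds hhalf)).exists
  have hex : ∃ t₀ : ℕ, ∀ᵐ y ∂ν, 1/2 < h t₀ y := by
    by_contra hcon
    push_neg at hcon
    have h0 : ∀ t : ℕ, ν {y | 1/2 < h t y} = 0 := by
      intro t
      rcases hAer t with h' | h'
      · exact h'
      · exfalso
        refine hcon t (ae_iff.mpr ?_)
        have hms : MeasurableSet {y | 1/2 < h t y} :=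
          measurableSet_lt measurable_const (hhmeas t)
        have hcompl : ν ({y | 1/2 < h t y}ᶜ) = 0 := by
          rw [measure_compl hms (measure_ne_top ν _), h', measure_univ, tsub_self]
        simpa only [Set.compl_setOf, not_lt, not_not] using hcompl
    have hall : ∀ᵐ y ∂ν, ∀ t : ℕ, ¬ (1/2 < h t y) := by
      rw [ae_all_iff]
      intro t
      refine ae_iff.mpr ?_
      have hset : {a : Y | ¬ ¬ ((1:ℝ≥0∞)/2 < h t a)} = {y | 1/2 < h t y} := by
        ext y
        simp only [Set.mem_setOf_eq, not_not]
      rw [hset]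
      exact h0 t
    haveI : (ae ν).NeBot := ae_neBot.mpr (IsProbabilityMeasure.ne_zero ν)
    obtain ⟨y, hy1, hy2⟩ := (hlim.and hall).exists
    obtain ⟨t, ht⟩ := hy1
    exact hy2 t ht
  obtain ⟨t₀, ht₀⟩ := hex
  -- fiberwise boundedness and integrability
  have hfibgt : ∀ᵐ x ∂μ, ∀ᵐ y ∂ρ x, 1/2 < ρ x {y' | ‖ξ y' - ξ y‖ ≤ (t₀ : ℝ)} := by
    have h2 := ae_fiber_of_ae hρmeas hdisint ht₀
    filter_upwards [h2, hρfib, hκρ] with x hx hfib hκx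
    filter_upwards [hx, ae_iff.mpr hfib] with y hy hpy
    show 1/2 < ρ x {y' | ‖ξ y' - ξ y‖ ≤ (t₀ : ℝ)}
    have : h t₀ y = κ (p y) {y' | ‖ξ y' - ξ y‖ ≤ (t₀ : ℝ)} := rfl
    rw [this, hpy, hκx] at hy
    exact hy
  have hint : ∀ᵐ x ∂μ, Integrable ξ (ρ x) := by
    filter_upwards [hfibgt, hρprob] with x hx hprob
    haveI := hprob
    haveI : (ae (ρ x)).NeBot := ae_neBot.mpr (IsProbabilityMeasure.ne_zero (ρ x))
    obtain ⟨y₀, hy₀⟩ := hx.exists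
    have hbd : ∀ᵐ y ∂ρ x, ‖ξ y‖ ≤ ‖ξ y₀‖ + 2 * (t₀ : ℝ) := by
      filter_upwards [hx] with y hy
      have hne : ({y' | ‖ξ y' - ξ y‖ ≤ (t₀ : ℝ)} ∩ {y' | ‖ξ y' - ξ y₀‖ ≤ (t₀ : ℝ)}).Nonempty := by
        rw [Set.nonempty_iff_ne_empty]
        intro hemp
        have hdisj : Disjoint {y' | ‖ξ y' - ξ y‖ ≤ (t₀ : ℝ)} {y' | ‖ξ y' - ξ y₀‖ ≤ (t₀ : ℝ)} :=
          Set.disjoint_iff_inter_eq_empty.mpr hemp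
        have hle : ρ x {y' | ‖ξ y' - ξ y‖ ≤ (t₀ : ℝ)} + ρ x {y' | ‖ξ y' - ξ y₀‖ ≤ (t₀ : ℝ)} ≤ 1 := by
          rw [← measure_union hdisj (hSmeas _ _)]
          exact prob_le_one
        have hgt : (1:ℝ≥0∞) < ρ x {y' | ‖ξ y' - ξ y‖ ≤ (t₀ : ℝ)} + ρ x {y' | ‖ξ y' - ξ y₀‖ ≤ (t₀ : ℝ)} := by
          calc (1:ℝ≥0∞) = 1/2 + 1/2 := (ENNReal.add_halves 1).symm
            _ < _ := ENNReal.add_lt_add hy hy₀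
        exact absurd hle (not_le.mpr hgt)
      obtain ⟨z, hz1, hz2⟩ := hne
      have h1 : ‖ξ z - ξ y‖ ≤ (t₀ : ℝ) := hz1
      have h2 : ‖ξ z - ξ y₀‖ ≤ (t₀ : ℝ) := hz2
      calc ‖ξ y‖ ≤ ‖ξ y₀‖ + ‖ξ y - ξ y₀‖ := by
            have := norm_add_le (ξ y₀) (ξ y - ξ y₀)
            simpa using this
        _ ≤ ‖ξ y₀‖ + (‖ξ y - ξ z‖ + ‖ξ z - ξ y₀‖) := by
            have := norm_sub_le_norm_sub_add_norm_sub (ξ y) (ξ z) (ξ y₀)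
            linarith
        _ ≤ ‖ξ y₀‖ + 2 * (t₀ : ℝ) := by
            rw [norm_sub_rev (ξ y)]
            linarith
    exact (integrable_const _).mono' hξm.aestronglyMeasurable hbd
  have hintκ : ∀ᵐ x ∂μ, Integrable ξ (κ x) := by
    filter_upwards [hint, hκρ] with x h1 h2
    rwa [h2]
  -- the candidate coboundary section
  set η : X → K := fun x => ∫ y, ξ y ∂(κ x) with hηdef
  have hηsm : StronglyMeasurable η := by
    have : StronglyMeasurable (fun q : X × Y => ξ q.2) :=
      (hξm.comp measurable_snd).stronglyMeasurable
    exact this.integral_kernel_prod_right'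
  refine ⟨η, hηsm.measurable, ?_⟩
  intro g
  have f2 : ∀ᵐ x ∂μ, κ (g⁻¹ • x) = ρ (g⁻¹ • x) := (qmpX g⁻¹).ae hκρ
  have f3 : ∀ᵐ x ∂μ, (ρ (g⁻¹ • x)).map (fun y => g • y) = ρ x := by
    filter_upwards [(qmpX g⁻¹).ae (hρinv g)] with x hx
    rwa [smul_inv_smul] at hx
  have f4 : ∀ᵐ x ∂μ, ∀ᵐ w ∂ρ (g⁻¹ • x), ξ (g • w) = L x g (ξ w) + b x g := by
    filter_upwards [(qmpX g⁻¹).ae (hEfib g)] with x hx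
    simpa [smul_inv_smul] using hx
  have f5 : ∀ᵐ x ∂μ, Integrable ξ (ρ (g⁻¹ • x)) := (qmpX g⁻¹).ae hint
  have f6 : ∀ᵐ x ∂μ, IsProbabilityMeasure (ρ (g⁻¹ • x)) := (qmpX g⁻¹).ae hρprob
  filter_upwards [hκρ, f2, f3, f4, f5, f6] with x h1 h2 h3 h4 h5 h6
  haveI := h6
  have hLint : Integrable (fun w => L x g (ξ w)) (ρ (g⁻¹ • x)) := by
    refine h5.norm.mono' ?_ ?_
    · exact (((L x g).continuous.measurable).comp hξm).aestronglyMeasurable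
    · filter_upwards with w
      rw [LinearIsometryEquiv.norm_map]
  have key : η x = L x g (η (g⁻¹ • x)) + b x g := by
    have e1 : η x = ∫ y, ξ y ∂((ρ (g⁻¹ • x)).map (fun y => g • y)) := by
      rw [hηdef]
      simp only
      rw [h1, ← h3]
    have e2 : ∫ y, ξ y ∂((ρ (g⁻¹ • x)).map (fun y => g • y))
        = ∫ w, ξ (g • w) ∂(ρ (g⁻¹ • x)) := by
      rw [integral_map (hqiY.1 g).aemeasurable hξm.aestronglyMeasurable]
    have e3 : ∫ w, ξ (g • w) ∂(ρ (g⁻¹ • x))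
        = ∫ w, (L x g (ξ w) + b x g) ∂(ρ (g⁻¹ • x)) := integral_congr_ae h4
    have e4 : ∫ w, (L x g (ξ w) + b x g) ∂(ρ (g⁻¹ • x))
        = (∫ w, L x g (ξ w) ∂(ρ (g⁻¹ • x))) + b x g := by
      rw [integral_add hLint (integrable_const _), integral_const]
      simp
    have e5 : ∫ w, L x g (ξ w) ∂(ρ (g⁻¹ • x)) = L x g (∫ w, ξ w ∂(ρ (g⁻¹ • x))) := by
      exact (L x g).toLinearIsometry.integral_comp_comm ξ
    have e6 : ∫ w, ξ w ∂(ρ (g⁻¹ • x)) = η (g⁻¹ • x) := by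
      rw [hηdef]
      simp only
      rw [h2]
    rw [e1, e2, e3, e4, e5, e6]
  rw [key]
  abel
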